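/- Let 𝔟 ≥ 1 and let Y ⊆ 𝔟^ℤ be the subshift of finite type described by forbidden patterns p_1,…,p_k, all of length L. If there exists a Borel equivariant map from F(2^ℤ) to Y, then for every n ≥ L there exists N such that for all integers p, q > N there are elements y_1, y_2 ∈ Y with y_1(m+p) = y_1(m) for all m ∈ ℤ, y_2(m+q) = y_2(m) for all m ∈ ℤ, and y_1(i) = y_2(i) for all 0 ≤ i < n. -/

import Mathlib

/-- The shift action of `ℤ` on `α^ℤ`: `(s · x)(n) = x(n + s)`. -/
def shift {α : Type*} (s : ℤ) (x : ℤ → α) : ℤ → α := fun n => x (n + s)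

/-- The free part `F(2^ℤ)` of the shift action on `2^ℤ = (ℤ → Bool)`. -/
def FreePart : Set (ℤ → Bool) := {x | ∀ s : ℤ, s ≠ 0 → shift s x ≠ x}

/-- The pattern `p` (of length `L`) occurs in `y ∈ b^ℤ`. -/
def Occurs {b L : ℕ} (p : Fin L → Fin b) (y : ℤ → Fin b) : Prop :=
  ∃ m : ℤ, ∀ i : Fin L, y (m + (i : ℤ)) = p i

/-- The subshift of finite type described by `(b; P 0, …, P (k-1))`:
the set of points of `b^ℤ` in which none of the forbidden patterns occurs. -/
def SFT {b L k : ℕ} (P : Fin k → Fin L → Fin b) : Set (ℤ → Fin b) :=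
  {y | ∀ j : Fin k, ¬ Occurs (P j) y}

/-- `f : F(2^ℤ) → Y` is equivariant: `f(s · x) = s · f(x)`. -/
def EquivariantOn {b : ℕ} (Y : Set (ℤ → Fin b))
    (f : {x : ℤ → Bool // x ∈ FreePart} → {y : ℤ → Fin b // y ∈ Y}) : Prop :=
  ∀ (x : {x : ℤ → Bool // x ∈ FreePart}) (s : ℤ) (h : shift s x.1 ∈ FreePart),
    (f ⟨shift s x.1, h⟩ : ℤ → Fin b) = shift s (f x : ℤ → Fin b)

namespace BEMaux

open MeasureTheory Set Filter
open scoped ENNReal symmDiff Classical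

noncomputable section

abbrev Bsp : Type := ℤ → ZMod 2

/-! ### Generic facts about `shift` -/

lemma measurable_shift {α : Type*} [MeasurableSpace α] (s : ℤ) :
    Measurable (shift s : (ℤ → α) → (ℤ → α)) :=
  measurable_pi_lambda _ (fun _ => measurable_pi_apply _)

lemma shift_shift {α : Type*} (s t : ℤ) (x : ℤ → α) :
    shift s (shift t x) = shift (t + s) x := by
  funext n; simp [shift]; ring_nf

lemma shift_zero {α : Type*} (x : ℤ → α) : shift 0 x = x := by
  funext n; simp [shift]

lemma freePart_shift {x : ℤ → Bool} (hx : x ∈ FreePart) (s : ℤ) : shift s x ∈ FreePart := by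
  intro t ht heq
  have h1 : shift (s + t) x = shift s x := by rw [← shift_shift]; exact heq
  have h2 : shift (-s) (shift (s + t) x) = shift (-s) (shift s x) := by rw [h1]
  rw [shift_shift, shift_shift] at h2
  rw [show s + t + -s = t by ring, show s + -s = 0 by ring, shift_zero] at h2
  exact hx t ht h2

lemma x0_free : (fun m : ℤ => decide (0 ≤ m)) ∈ FreePart := by
  intro s hs heq
  have h1 : decide (0 ≤ (0 : ℤ) + s) = decide (0 ≤ (0 : ℤ)) := congrFun heq 0
  have h2 : decide (0 ≤ -s + s) = decide (0 ≤ -s) := congrFun heq (-s)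
  rw [decide_eq_decide] at h1 h2
  exact hs (by omega)

lemma measurableSet_perSet {α : Type*} [MeasurableSpace α] [MeasurableSingletonClass α]
    [Countable α] (s : ℤ) : MeasurableSet {x : ℤ → α | shift s x = x} := by
  have h2 : {x : ℤ → α | shift s x = x} = ⋂ (m : ℤ), {x : ℤ → α | x (m + s) = x m} := by
    ext x; simp [funext_iff, shift]
  rw [h2]
  refine MeasurableSet.iInter fun m => ?_
  have h3 : {x : ℤ → α | x (m + s) = x m}
      = ⋃ c : α, (((fun x : ℤ → α => x (m + s)) ⁻¹' {c}) ∩ ((fun x : ℤ → α => x m) ⁻¹' {c})) := by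
    ext x
    simp only [mem_setOf_eq, mem_iUnion, mem_inter_iff, mem_preimage, mem_singleton_iff]
    exact ⟨fun h => ⟨x m, h, rfl⟩, fun ⟨c, h1, h2⟩ => h1.trans h2.symm⟩
  rw [h3]
  exact MeasurableSet.iUnion fun c =>
    ((measurable_pi_apply _) (measurableSet_singleton _)).inter
      ((measurable_pi_apply _) (measurableSet_singleton _))

lemma measurableSet_freePart : MeasurableSet FreePart := by
  have h : FreePart = ⋂ (s : ℤ), ⋂ (_ : s ≠ 0), {x : ℤ → Bool | shift s x = x}ᶜ := by
    ext x; simp [FreePart]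
  rw [h]
  exact MeasurableSet.iInter fun s => MeasurableSet.iInter fun _ =>
    (measurableSet_perSet s).compl

/-! ### The Haar (Bernoulli) measure on `(ℤ → ZMod 2)` -/

def K0 : TopologicalSpace.PositiveCompacts Bsp :=
  ⟨⟨Set.univ, isCompact_univ⟩, by simp⟩

def muB : Measure Bsp := Measure.addHaarMeasure K0

instance : IsProbabilityMeasure muB :=
  ⟨Measure.addHaarMeasure_self (K₀ := K0)⟩

instance : muB.IsAddLeftInvariant := by unfold muB; infer_instance

lemma shift_add (s : ℤ) (x y : Bsp) : shift s (x + y) = shift s x + shift s y := rfl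

lemma shift_measurePreserving (s : ℤ) : MeasurePreserving (shift s) muB muB := by
  refine ⟨measurable_shift s, ?_⟩
  have hinv : (muB.map (shift s)).IsAddLeftInvariant := by
    constructor
    intro g
    have h1 : (fun x => g + x) ∘ (shift s) = (shift s) ∘ (fun x => shift (-s) g + x) := by
      funext x
      simp only [Function.comp_apply, shift_add, shift_shift]
      rw [neg_add_cancel, shift_zero]
    rw [Measure.map_map (measurable_const_add g) (measurable_shift s), h1,
      ← Measure.map_map (measurable_shift s) (measurable_const_add _),
      Measure.IsAddLeftInvariant.map_add_left_eq_self (μ := muB) (shift (-s) g)]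
  haveI : IsProbabilityMeasure (muB.map (shift s)) :=
    Measure.isProbabilityMeasure_map (measurable_shift s).aemeasurable
  have h2 := Measure.addHaarMeasure_unique (muB.map (shift s)) K0
  have h3 : (muB.map (shift s)) ↑K0 = 1 := by
    have h : (K0 : Set Bsp) = Set.univ := rfl
    rw [h]; exact measure_univ
  rw [h2, h3, one_smul]; rfl

/-! ### Atoms (basic cylinders) and their measures -/

def Atom (s : Finset ℤ) (v : ℤ → ZMod 2) : Set Bsp := {x | ∀ i ∈ s, x i = v i}

lemma measurableSet_atom (s : Finset ℤ) (v : ℤ → ZMod 2) : MeasurableSet (Atom s v) := by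
  have h : Atom s v = ⋂ i ∈ s, ((fun x : Bsp => x i) ⁻¹' {v i}) := by
    ext x; simp [Atom]
  rw [h]
  exact MeasurableSet.biInter s.countable_toSet
    (fun i _ => (measurable_pi_apply i) (measurableSet_singleton _))

lemma atom_translate (s : Finset ℤ) (v w : ℤ → ZMod 2) :
    muB (Atom s v) = muB (Atom s w) := by
  have h : Atom s v = (fun x => (w - v) + x) ⁻¹' Atom s w := by
    ext x
    simp only [Atom, mem_setOf_eq, mem_preimage, Pi.add_apply, Pi.sub_apply]
    constructor
    · intro h i hi; rw [h i hi]; ring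
    · intro h i hi; have := h i hi; linear_combination this
  rw [h, measure_preimage_add]

lemma zmod2_cases : ∀ u w : ZMod 2, u = w ∨ u = w + 1 := by decide

lemma atom_measure (s : Finset ℤ) (v : ℤ → ZMod 2) :
    muB (Atom s v) = (2 ^ s.card)⁻¹ := by
  induction s using Finset.induction_on generalizing v with
  | empty => simp [Atom]
  | @insert a s ha ih =>
    set d : ℤ → ZMod 2 := fun i => if i = a then 1 else 0 with hd
    have hsplit : Atom s v = Atom (insert a s) v ∪ Atom (insert a s) (v + d) := by
      ext x
      simp only [Atom, mem_setOf_eq, mem_union, Finset.mem_insert]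
      constructor
      · intro hx
        rcases zmod2_cases (x a) (v a) with h | h
        · left; rintro i (rfl | hi); · exact h
          · exact hx i hi
        · right; rintro i (rfl | hi)
          · simp [hd, h]
          · have hia : i ≠ a := fun hh => ha (hh ▸ hi)
            simp [hd, hia, hx i hi]
      · rintro (hx | hx) i hi
        · exact hx i (Or.inr hi)
        · have hia : i ≠ a := fun hh => ha (hh ▸ hi)
          have := hx i (Or.inr hi)
          simpa [hd, hia] using this
    have hdisj : Disjoint (Atom (insert a s) v) (Atom (insert a s) (v + d)) := by
      rw [Set.disjoint_left]
      intro x hx hx'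
      have h1 := hx a (Finset.mem_insert_self a s)
      have h2 := hx' a (Finset.mem_insert_self a s)
      rw [h1] at h2
      simp [hd] at h2
    have htr : muB (Atom (insert a s) (v + d)) = muB (Atom (insert a s) v) :=
      atom_translate _ _ _
    have hsum : muB (Atom s v) = 2 * muB (Atom (insert a s) v) := by
      rw [hsplit, measure_union hdisj (measurableSet_atom _ _), htr, two_mul]
    have h2 : (2 : ℝ≥0∞) * muB (Atom (insert a s) v) = (2 ^ s.card)⁻¹ := by
      rw [← hsum, ih]
    have h3 : muB (Atom (insert a s) v) = 2⁻¹ * (2 ^ s.card)⁻¹ := by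
      rw [← h2, ← mul_assoc, ENNReal.inv_mul_cancel two_ne_zero ENNReal.ofNat_ne_top, one_mul]
    rw [h3, Finset.card_insert_of_notMem ha, pow_succ, ENNReal.mul_inv (by simp) (by simp),
      mul_comm]

/-! ### Sets depending on finitely many coordinates -/

def Dep (s : Finset ℤ) (C : Set Bsp) : Prop :=
  ∀ x y : Bsp, (∀ i ∈ s, x i = y i) → (x ∈ C ↔ y ∈ C)

lemma Dep.mono {s t : Finset ℤ} (hst : s ⊆ t) {C : Set Bsp} (h : Dep s C) : Dep t C :=
  fun x y hxy => h x y (fun i hi => hxy i (hst hi))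

def Rmap (s : Finset ℤ) : Bsp → (s → ZMod 2) := fun x i => x i.1

def ext0 (s : Finset ℤ) (v : s → ZMod 2) : ℤ → ZMod 2 :=
  fun i => if h : i ∈ s then v ⟨i, h⟩ else 0

lemma Rmap_preimage_singleton (s : Finset ℤ) (v : s → ZMod 2) :
    Rmap s ⁻¹' {v} = Atom s (ext0 s v) := by
  ext x
  simp only [mem_preimage, mem_singleton_iff, funext_iff, Atom, mem_setOf_eq, Rmap, ext0]
  constructor
  · intro h i hi; simpa [hi] using h ⟨i, hi⟩
  · intro h i; simpa [i.2] using h i.1 i.2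

lemma measure_Rpre (s : Finset ℤ) (V : Finset (s → ZMod 2)) :
    muB (Rmap s ⁻¹' ↑V) = V.card * (2 ^ s.card)⁻¹ := by
  have h : Rmap s ⁻¹' (↑V : Set (s → ZMod 2)) = ⋃ v ∈ V, Rmap s ⁻¹' {v} := by
    ext x; simp
  rw [h, measure_biUnion_finset]
  · simp [Rmap_preimage_singleton, atom_measure]
  · intro v _ w _ hvw
    refine Set.disjoint_left.mpr fun x hx hx' => hvw ?_
    simp only [mem_preimage, mem_singleton_iff] at hx hx'
    rw [← hx, ← hx']
  · intro v _
    rw [Rmap_preimage_singleton]; exact measurableSet_atom _ _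

lemma dep_eq_Rpre {s : Finset ℤ} {C : Set Bsp} (h : Dep s C) :
    C = Rmap s ⁻¹' ↑(Set.toFinite (Rmap s '' C)).toFinset := by
  ext x
  simp only [mem_preimage, Set.Finite.coe_toFinset, mem_image]
  constructor
  · intro hx; exact ⟨x, hx, rfl⟩
  · rintro ⟨y, hyC, hyx⟩
    exact (h y x (fun i hi => congrFun hyx ⟨i, hi⟩)).mp hyC

lemma atom_inter {s t : Finset ℤ} (hst : Disjoint s t) (v w : ℤ → ZMod 2) :
    Atom s v ∩ Atom t w = Atom (s ∪ t) (fun i => if i ∈ s then v i else w i) := by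
  ext x
  simp only [Atom, mem_inter_iff, mem_setOf_eq, Finset.mem_union]
  constructor
  · rintro ⟨h1, h2⟩ i (hi | hi)
    · simp [hi, h1 i hi]
    · have his : i ∉ s := fun hs => (Finset.disjoint_left.mp hst) hs hi
      simp [his, h2 i hi]
  · intro h
    constructor
    · intro i hi; simpa [hi] using h i (Or.inl hi)
    · intro i hi
      have his : i ∉ s := fun hs => (Finset.disjoint_left.mp hst) hs hi
      simpa [his] using h i (Or.inr hi)

lemma measure_pair_atom {s t : Finset ℤ} (hst : Disjoint s t) (v : s → ZMod 2)
    (w : t → ZMod 2) :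
    muB (Rmap s ⁻¹' {v} ∩ Rmap t ⁻¹' {w}) = (2 ^ s.card)⁻¹ * (2 ^ t.card)⁻¹ := by
  rw [Rmap_preimage_singleton, Rmap_preimage_singleton, atom_inter hst, atom_measure,
    Finset.card_union_of_disjoint hst, pow_add, ENNReal.mul_inv (by simp) (by simp)]

lemma indep {s t : Finset ℤ} (hst : Disjoint s t) {C D : Set Bsp}
    (hC : Dep s C) (hD : Dep t D) : muB (C ∩ D) = muB C * muB D := by
  set V := (Set.toFinite (Rmap s '' C)).toFinset with hV
  set W := (Set.toFinite (Rmap t '' D)).toFinset with hW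
  have hCeq := dep_eq_Rpre hC
  have hDeq := dep_eq_Rpre hD
  have hinter : C ∩ D = ⋃ p ∈ V ×ˢ W, (Rmap s ⁻¹' {p.1} ∩ Rmap t ⁻¹' {p.2}) := by
    rw [hCeq, hDeq]
    ext x
    simp only [mem_inter_iff, mem_preimage, Set.Finite.coe_toFinset, mem_iUnion,
      Finset.mem_product, mem_singleton_iff, ← hV, ← hW]
    constructor
    · rintro ⟨h1, h2⟩
      exact ⟨(Rmap s x, Rmap t x), ⟨by simpa [hV] using h1, by simpa [hW] using h2⟩, rfl, rfl⟩
    · rintro ⟨⟨pv, pw⟩, ⟨hp1, hp2⟩, h1, h2⟩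
      subst h1; subst h2
      exact ⟨by simpa [hV] using hp1, by simpa [hW] using hp2⟩
  rw [hinter, measure_biUnion_finset, hCeq, hDeq, measure_Rpre, measure_Rpre]
  · rw [Finset.sum_congr rfl (fun p _ => measure_pair_atom hst p.1 p.2)]
    rw [Finset.sum_const, Finset.card_product, nsmul_eq_mul]
    push_cast
    ring
  · rintro ⟨v, w⟩ hvw ⟨v', w'⟩ hvw' hne
    refine Set.disjoint_left.mpr fun x hx hx' => hne ?_
    simp only [mem_inter_iff, mem_preimage, mem_singleton_iff] at hx hx'
    simp only [Prod.mk.injEq]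
    exact ⟨hx.1 ▸ hx'.1.symm ▸ rfl, hx.2 ▸ hx'.2.symm ▸ rfl⟩
  · rintro ⟨v, w⟩ _
    rw [Rmap_preimage_singleton, Rmap_preimage_singleton]
    exact (measurableSet_atom _ _).inter (measurableSet_atom _ _)

/-! ### Approximation of measurable sets by finite cylinders -/

def Approx (A : Set Bsp) : Prop :=
  ∀ ε : ℝ≥0∞, 0 < ε →
    ∃ (s : Finset ℤ) (C : Set Bsp), Dep s C ∧ MeasurableSet C ∧ muB (A ∆ C) ≤ ε

lemma approx_empty : Approx (∅ : Set Bsp) :=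
  fun ε _ => ⟨∅, ∅, fun _ _ _ => Iff.rfl, MeasurableSet.empty, by simp⟩

lemma Approx.compl {A : Set Bsp} (h : Approx A) : Approx Aᶜ := by
  intro ε hε
  obtain ⟨s, C, hdep, hmeas, hle⟩ := h ε hε
  refine ⟨s, Cᶜ, fun x y hxy => not_congr (hdep x y hxy), hmeas.compl, ?_⟩
  rwa [compl_symmDiff_compl]

lemma approx_iUnion (f : ℕ → Set Bsp) (hm : ∀ i, MeasurableSet (f i))
    (h : ∀ i, Approx (f i)) : Approx (⋃ i, f i) := by
  intro ε hε
  set A := ⋃ i, f i with hA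
  by_cases h0 : muB A ≤ ε
  · exact ⟨∅, ∅, fun _ _ _ => Iff.rfl, MeasurableSet.empty, by
      rw [show (∅ : Set Bsp) = ⊥ from rfl, symmDiff_bot]; exact h0⟩
  push_neg at h0
  set S : ℕ → Set Bsp := fun K => ⋃ i ∈ Finset.range (K + 1), f i with hS
  have hSm : ∀ K, MeasurableSet (S K) := fun K => Finset.measurableSet_biUnion _ (fun i _ => hm i)
  have hmono : Monotone S := by
    intro a b hab x hx
    simp only [hS, mem_iUnion, Finset.mem_range] at *
    obtain ⟨i, hi, hx⟩ := hx
    exact ⟨i, by omega, hx⟩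
  have hUS : ⋃ K, S K = A := by
    ext x
    simp only [hS, mem_iUnion, hA, Finset.mem_range]
    constructor
    · rintro ⟨K, i, _, hx⟩; exact ⟨i, hx⟩
    · rintro ⟨i, hx⟩; exact ⟨i, i, by omega, hx⟩
  have htend : Tendsto (fun K => muB (S K)) atTop (nhds (muB A)) := by
    rw [← hUS]
    exact tendsto_measure_iUnion_atTop hmono
  have hhalf : ε / 2 ≠ 0 := (ENNReal.div_pos hε.ne' (by norm_num)).ne'
  have hlt : muB A - ε / 2 < muB A :=
    ENNReal.sub_lt_self (measure_ne_top _ _) (hε.trans h0).ne' hhalf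
  obtain ⟨K, hK⟩ := (htend.eventually (eventually_gt_nhds hlt)).exists
  have hεtop : ε ≠ ⊤ := (h0.trans (measure_lt_top _ _)).ne
  have hsub : S K ⊆ A := by
    rw [← hUS]; exact subset_iUnion S K
  have hdiff : muB (A \ S K) ≤ ε / 2 := by
    rw [measure_diff hsub (hSm K).nullMeasurableSet (measure_ne_top _ _)]
    refine tsub_le_iff_right.mpr ?_
    have h2 : ε / 2 ≤ muB A := le_trans (ENNReal.half_le_self) (le_of_lt h0)
    have := (ENNReal.sub_lt_iff_lt_right ((ENNReal.div_lt_top hεtop (by norm_num)).ne) h2).mp hK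
    rw [add_comm]
    exact le_of_lt this
  have hpiece : ∀ i : ℕ, ∃ (s : Finset ℤ) (C : Set Bsp),
      Dep s C ∧ MeasurableSet C ∧ muB (f i ∆ C) ≤ ε / (2 * (K + 1)) := by
    intro i
    exact h i (ε / (2 * (K + 1))) (ENNReal.div_pos hε.ne' (by simp [ENNReal.mul_eq_top]))
  choose sc Cc hdep hmeasC hleC using hpiece
  refine ⟨(Finset.range (K + 1)).biUnion sc, ⋃ i ∈ Finset.range (K + 1), Cc i, ?_, ?_, ?_⟩
  · intro x y hxy
    simp only [mem_iUnion]
    constructor <;> rintro ⟨i, hi, hx⟩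
    · exact ⟨i, hi, ((hdep i).mono (fun j hj => Finset.mem_biUnion.mpr ⟨i, hi, hj⟩) x y hxy).mp hx⟩
    · exact ⟨i, hi, ((hdep i).mono (fun j hj => Finset.mem_biUnion.mpr ⟨i, hi, hj⟩) x y hxy).mpr hx⟩
  · exact Finset.measurableSet_biUnion _ (fun i _ => hmeasC i)
  · set C := ⋃ i ∈ Finset.range (K + 1), Cc i with hC
    have hsub1 : A ∆ C ⊆ (A \ S K) ∪ (S K ∆ C) := by
      intro x hx
      rcases hx with ⟨hxA, hxC⟩ | ⟨hxC, hxA⟩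
      · by_cases hxS : x ∈ S K
        · exact Or.inr (Or.inl ⟨hxS, hxC⟩)
        · exact Or.inl ⟨hxA, hxS⟩
      · have hxS : x ∉ S K := fun hxS => hxA (hsub hxS)
        exact Or.inr (Or.inr ⟨hxC, hxS⟩)
    have hsub2 : S K ∆ C ⊆ ⋃ i ∈ Finset.range (K + 1), (f i ∆ Cc i) := by
      intro x hx
      simp only [mem_iUnion]
      rcases hx with ⟨hxS, hxC⟩ | ⟨hxC, hxS⟩
      · simp only [hS, mem_iUnion] at hxS
        obtain ⟨i, hi, hx⟩ := hxS
        refine ⟨i, hi, Or.inl ⟨hx, fun hc => hxC ?_⟩⟩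
        simp only [hC, mem_iUnion]; exact ⟨i, hi, hc⟩
      · simp only [hC, mem_iUnion] at hxC
        obtain ⟨i, hi, hx⟩ := hxC
        refine ⟨i, hi, Or.inr ⟨hx, fun hc => hxS ?_⟩⟩
        simp only [hS, mem_iUnion]; exact ⟨i, hi, hc⟩
    calc muB (A ∆ C) ≤ muB ((A \ S K) ∪ (S K ∆ C)) := measure_mono hsub1
      _ ≤ muB (A \ S K) + muB (S K ∆ C) := measure_union_le _ _
      _ ≤ ε / 2 + muB (⋃ i ∈ Finset.range (K + 1), (f i ∆ Cc i)) :=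
          add_le_add hdiff (measure_mono hsub2)
      _ ≤ ε / 2 + ∑ i ∈ Finset.range (K + 1), muB (f i ∆ Cc i) :=
          add_le_add le_rfl (measure_biUnion_finset_le _ _)
      _ ≤ ε / 2 + ∑ _i ∈ Finset.range (K + 1), ε / (2 * (K + 1)) :=
          add_le_add le_rfl (Finset.sum_le_sum (fun i _ => hleC i))
      _ ≤ ε := by
          rw [Finset.sum_const, Finset.card_range, nsmul_eq_mul]
          push_cast
          have hc : ((K : ℝ≥0∞) + 1) ≠ 0 := by simp
          have hct : ((K : ℝ≥0∞) + 1) ≠ ⊤ := by simp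
          have heq : ((K : ℝ≥0∞) + 1) * (ε / (2 * ((K : ℝ≥0∞) + 1))) = ε / 2 := by
            calc ((K : ℝ≥0∞) + 1) * (ε / (2 * ((K : ℝ≥0∞) + 1)))
                = (((K : ℝ≥0∞) + 1) * ((K : ℝ≥0∞) + 1)⁻¹) * (2⁻¹ * ε) := by
                  rw [ENNReal.div_eq_inv_mul,
                    ENNReal.mul_inv (Or.inl two_ne_zero) (Or.inl ENNReal.ofNat_ne_top)]
                  ring
              _ = ε / 2 := by
                  rw [ENNReal.mul_inv_cancel hc hct, one_mul, ENNReal.div_eq_inv_mul]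
          rw [heq, ENNReal.add_halves]

def mApprox : MeasurableSpace Bsp where
  MeasurableSet' := fun A => MeasurableSet A ∧ Approx A
  measurableSet_empty := ⟨MeasurableSet.empty, approx_empty⟩
  measurableSet_compl := fun _ h => ⟨h.1.compl, h.2.compl⟩
  measurableSet_iUnion := fun f hf => ⟨MeasurableSet.iUnion (fun i => (hf i).1),
    approx_iUnion f (fun i => (hf i).1) (fun i => (hf i).2)⟩

lemma approx_of_measurable {A : Set Bsp} (hA : MeasurableSet A) : Approx A := by
  have hle : (inferInstance : MeasurableSpace Bsp) ≤ mApprox := by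
    refine le_trans (le_of_eq rfl :
      (inferInstance : MeasurableSpace Bsp) ≤
        (⨆ i : ℤ, MeasurableSpace.comap (fun x : Bsp => x i) inferInstance)) ?_
    refine iSup_le fun i => ?_
    intro A hA
    obtain ⟨S, _, rfl⟩ := hA
    refine ⟨measurable_pi_apply i (show MeasurableSet S from trivial), ?_⟩
    intro ε _
    refine ⟨{i}, (fun x : Bsp => x i) ⁻¹' S, ?_, ?_, ?_⟩
    · intro x y hxy
      simp only [mem_preimage]
      rw [hxy i (Finset.mem_singleton_self i)]
    · exact measurable_pi_apply i (show MeasurableSet S from trivial)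
    · rw [symmDiff_self]; simp
  exact (hle A hA).2

/-! ### The mixing estimate -/

lemma Dep.shiftPre {s : Finset ℤ} {C : Set Bsp} (h : Dep s C) (p : ℤ) :
    Dep (s.image (· + p)) (shift p ⁻¹' C) := by
  intro x y hxy
  simp only [mem_preimage]
  exact h _ _ (fun i hi => hxy (i + p) (Finset.mem_image_of_mem _ hi))

lemma preimage_symmDiff' (p : ℤ) (A C : Set Bsp) :
    shift p ⁻¹' (A ∆ C) = (shift p ⁻¹' A) ∆ (shift p ⁻¹' C) := by
  ext x; simp [Set.mem_symmDiff]

lemma mixing {A : Set Bsp} (hA : MeasurableSet A) (h0 : muB A ≠ 0) :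
    ∃ N : ℕ, ∀ p : ℤ, (N : ℤ) < p → (A ∩ shift p ⁻¹' A).Nonempty := by
  set a := muB A with ha
  have ha1 : a ≤ 1 := prob_le_one
  set ε : ℝ≥0∞ := a * a / 16 with hεdef
  have hx0 : a * a ≠ 0 := mul_ne_zero h0 h0
  have hxt : a * a ≠ ⊤ := (ENNReal.mul_lt_top (measure_lt_top _ _) (measure_lt_top _ _)).ne
  have hε : 0 < ε := ENNReal.div_pos hx0 (by norm_num)
  obtain ⟨s, C, hdep, hmeasC, hAC⟩ := approx_of_measurable hA ε hε
  set W := s.sup (fun i => i.natAbs) with hW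
  refine ⟨2 * W, fun p hp => ?_⟩
  have hdisj : Disjoint s (s.image (· + p)) := by
    rw [Finset.disjoint_left]
    rintro i hi hmem
    obtain ⟨j, hj, rfl⟩ := Finset.mem_image.mp hmem
    have h1 : (j + p).natAbs ≤ W := Finset.le_sup (f := fun i => i.natAbs) hi
    have h2 : j.natAbs ≤ W := Finset.le_sup (f := fun i => i.natAbs) hj
    omega
  set A' := shift p ⁻¹' A with hA'
  set C' := shift p ⁻¹' C with hC'
  have hmp := shift_measurePreserving p
  have hCC' : muB (C ∩ C') = muB C * muB C := by
    rw [indep hdisj hdep (hdep.shiftPre p), hmp.measure_preimage hmeasC.nullMeasurableSet]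
  have hAC' : muB (A' ∆ C') ≤ ε := by
    rw [hA', hC', ← preimage_symmDiff',
      hmp.measure_preimage (hA.symmDiff hmeasC).nullMeasurableSet]
    exact hAC
  rcases Set.eq_empty_or_nonempty (A ∩ A') with hemp | hne
  · exfalso
    have hXsub : C ∩ C' ⊆ (A ∆ C) ∪ (A' ∆ C') := by
      intro x ⟨hxC, hxC'⟩
      by_cases hxA : x ∈ A
      · by_cases hxA' : x ∈ A'
        · exact absurd (Set.mem_inter hxA hxA') (hemp ▸ Set.notMem_empty x)
        · exact Or.inr (Or.inr ⟨hxC', hxA'⟩)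
      · exact Or.inl (Or.inr ⟨hxC, hxA⟩)
    have hcc : muB C * muB C ≤ 2 * ε := by
      rw [← hCC']
      calc muB (C ∩ C') ≤ muB ((A ∆ C) ∪ (A' ∆ C')) := measure_mono hXsub
        _ ≤ muB (A ∆ C) + muB (A' ∆ C') := measure_union_le _ _
        _ ≤ ε + ε := add_le_add hAC hAC'
        _ = 2 * ε := (two_mul ε).symm
    have haC : a ≤ muB C + ε := by
      calc a ≤ muB (C ∪ (A ∆ C)) := measure_mono (fun x hx => by
        by_cases hxC : x ∈ C
        · exact Or.inl hxC
        · exact Or.inr (Or.inl ⟨hx, hxC⟩))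
        _ ≤ muB C + muB (A ∆ C) := measure_union_le _ _
        _ ≤ muB C + ε := add_le_add le_rfl hAC
    have hC1 : muB C ≤ 1 := prob_le_one
    have hε1 : ε ≤ 1 := by
      calc ε ≤ 1 * 1 / 16 := by
            apply ENNReal.div_le_div_right
            exact mul_le_mul' ha1 ha1
        _ ≤ 1 := by norm_num
    have key : a * a ≤ 5 * ε := by
      calc a * a ≤ (muB C + ε) * (muB C + ε) := mul_le_mul' haC haC
        _ = muB C * muB C + (muB C * ε + ε * muB C + ε * ε) := by ring
        _ ≤ 2 * ε + (1 * ε + ε * 1 + ε * 1) := by gcongr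
        _ = 5 * ε := by ring
    have h16 : (16 : ℝ≥0∞) * (a * a) ≤ 5 * (a * a) := by
      calc (16 : ℝ≥0∞) * (a * a) ≤ 16 * (5 * (a * a / 16)) := mul_le_mul_right key 16
        _ = 5 * (16 * (a * a / 16)) := by ring
        _ = 5 * (a * a) := by
            rw [ENNReal.mul_div_cancel (by norm_num) (by norm_num)]
    have hfin : (16 : ℝ≥0∞) ≤ 5 := by
      rw [mul_comm (16 : ℝ≥0∞) _, mul_comm (5 : ℝ≥0∞) _] at h16
      exact (ENNReal.mul_le_mul_iff_right hx0 hxt).mp h16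
    norm_num at hfin
  · exact hne

/-! ### Null sets of periodic points; the free part is conull -/

def emap : Bsp → (ℤ → Bool) := fun x m => decide (x m = 1)

lemma emap_measurable : Measurable emap :=
  measurable_pi_lambda _ fun m =>
    (Measurable.of_discrete (f := fun c : ZMod 2 => decide (c = 1))).comp
      (measurable_pi_apply m)

lemma emap_inj : Function.Injective emap := fun x y h => funext fun m =>
  (by decide : ∀ c d : ZMod 2, decide (c = 1) = decide (d = 1) → c = d)
    (x m) (y m) (congrFun h m)

lemma emap_shift (s : ℤ) (x : Bsp) : emap (shift s x) = shift s (emap x) := rfl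

def PerB (s : ℤ) : Set Bsp := {x | shift s x = x}

lemma perB_neg (s : ℤ) : PerB (-s) = PerB s := by
  ext x
  simp only [PerB, mem_setOf_eq, funext_iff, shift]
  constructor
  · intro h n
    have := h (n + s)
    rw [show n + s + -s = n by ring] at this
    exact this.symm
  · intro h n
    have := h (n + -s)
    rw [show n + -s + s = n by ring] at this
    exact this.symm

lemma perB_null (s : ℤ) (hs : s ≠ 0) : muB (PerB s) = 0 := by
  suffices h : ∀ s : ℤ, 0 < s → muB (PerB s) = 0 by
    rcases hs.lt_or_gt with h' | h'
    · rw [← perB_neg]; exact h _ (by omega)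
    · exact h _ h'
  clear hs s
  intro s hs
  have key : ∀ M : ℕ, muB (PerB s) ≤ (2 ^ M)⁻¹ := by
    intro M
    set T : Finset ℤ := (Finset.range (M + 1)).image (fun j : ℕ => (j : ℤ) * s) with hT
    have hTcard : T.card = M + 1 := by
      rw [hT, Finset.card_image_of_injective _ ?_, Finset.card_range]
      intro a b hab
      have : (a : ℤ) = b := mul_right_cancel₀ (by omega) hab
      exact_mod_cast this
    have hsub : PerB s ⊆ Atom T (fun _ => (0 : ZMod 2)) ∪ Atom T (fun _ => 1) := by
      intro x hx
      have hper : ∀ n, x (n + s) = x n := funext_iff.mp hx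
      have hj : ∀ j : ℕ, x ((j : ℤ) * s) = x 0 := by
        intro j
        induction j with
        | zero => norm_num
        | succ j ih =>
          have hstep := hper ((j : ℤ) * s)
          push_cast
          rw [show ((j : ℤ) + 1) * s = (j : ℤ) * s + s by ring, hstep, ih]
      rcases zmod2_cases (x 0) 0 with h | h
      · left
        intro i hi
        obtain ⟨j, _, rfl⟩ := Finset.mem_image.mp hi
        rw [hj j, h]
      · right
        intro i hi
        obtain ⟨j, _, rfl⟩ := Finset.mem_image.mp hi
        rw [hj j, h]
        norm_num
    calc muB (PerB s) ≤ muB (Atom T (fun _ => (0 : ZMod 2)) ∪ Atom T (fun _ => 1)) :=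
          measure_mono hsub
      _ ≤ muB (Atom T (fun _ => (0 : ZMod 2))) + muB (Atom T (fun _ => 1)) :=
          measure_union_le _ _
      _ = (2 ^ (M + 1))⁻¹ + (2 ^ (M + 1))⁻¹ := by rw [atom_measure, atom_measure, hTcard]
      _ = (2 ^ M)⁻¹ := by
          rw [← two_mul, pow_succ, ENNReal.mul_inv (by simp) (by simp),
            show (2 : ℝ≥0∞) * ((2 ^ M)⁻¹ * 2⁻¹) = (2 ^ M)⁻¹ * (2⁻¹ * 2) by ring,
            ENNReal.inv_mul_cancel two_ne_zero ENNReal.ofNat_ne_top, mul_one]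
  by_contra h0
  obtain ⟨M, hM⟩ := ENNReal.exists_inv_two_pow_lt h0
  have hle := key M
  rw [ENNReal.inv_pow] at hle
  exact absurd (lt_of_lt_of_le hM hle) (lt_irrefl _)

def FreePartB : Set Bsp := emap ⁻¹' FreePart

lemma freePartB_meas : MeasurableSet FreePartB :=
  emap_measurable measurableSet_freePart

lemma freePartB_one : muB FreePartB = 1 := by
  rw [← prob_compl_eq_zero_iff freePartB_meas]
  have hsub : FreePartBᶜ ⊆ ⋃ (s : ℤ), ⋃ (_ : s ≠ 0), PerB s := by
    intro x hx
    simp only [FreePartB, mem_compl_iff, mem_preimage, FreePart, mem_setOf_eq] at hx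
    push_neg at hx
    obtain ⟨s, hs, heq⟩ := hx
    refine mem_iUnion.mpr ⟨s, mem_iUnion.mpr ⟨hs, ?_⟩⟩
    have h2 : emap (shift s x) = emap x := heq
    exact emap_inj h2
  refine measure_mono_null hsub (measure_iUnion_null fun s => ?_)
  rcases eq_or_ne s 0 with rfl | hs
  · simp
  · simpa [hs] using perB_null s hs

end

end BEMaux

/-! ### Closing up a doubly-occurring word into a periodic point -/

lemma BEMaux.periodize {b L k : ℕ} (P : Fin k → Fin L → Fin b) {y : ℤ → Fin b}
    (hy : y ∈ SFT P) {n : ℕ} (hL : L ≤ n) {p : ℕ} (hp : n < p)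
    {u : Fin n → Fin b} (h0 : ∀ i : Fin n, y ((i : ℕ) : ℤ) = u i)
    (hpw : ∀ i : Fin n, y ((p : ℤ) + ((i : ℕ) : ℤ)) = u i) :
    ∃ y₁ ∈ SFT P, (∀ m : ℤ, y₁ (m + (p : ℤ)) = y₁ m) ∧
      (∀ i : Fin n, y₁ ((i : ℕ) : ℤ) = u i) := by
  have hp0 : (0 : ℤ) < (p : ℤ) := Int.natCast_pos.mpr (by omega)
  set y₁ : ℤ → Fin b := fun m => y (m % (p : ℤ)) with hy₁
  have hagree : ∀ t : ℤ, 0 ≤ t → t < (p : ℤ) + (n : ℤ) → y₁ t = y t := by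
    intro t ht0 htn
    by_cases htp : t < (p : ℤ)
    · simp only [hy₁]
      rw [Int.emod_eq_of_lt ht0 htp]
    · push_neg at htp
      have h1 : t % (p : ℤ) = t - p := by
        rw [← Int.sub_emod_right t (p : ℤ)]
        exact Int.emod_eq_of_lt (by omega) (by omega)
      have hi : ((t - p).toNat : ℤ) = t - p := Int.toNat_of_nonneg (by omega)
      have hin : (t - p).toNat < n := by omega
      have e1 : y (t - p) = u ⟨(t - p).toNat, hin⟩ := by
        have h := (h0 ⟨(t - p).toNat, hin⟩ :
          y (((t - p).toNat : ℕ) : ℤ) = u ⟨(t - p).toNat, hin⟩)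
        rwa [hi] at h
      have e2 : y t = u ⟨(t - p).toNat, hin⟩ := by
        have h := (hpw ⟨(t - p).toNat, hin⟩ :
          y ((p : ℤ) + (((t - p).toNat : ℕ) : ℤ)) = u ⟨(t - p).toNat, hin⟩)
        rw [hi, show (p : ℤ) + (t - p) = t by ring] at h
        exact h
      simp only [hy₁, h1, e1, e2]
  have hper : ∀ m : ℤ, y₁ (m + (p : ℤ)) = y₁ m := by
    intro m
    simp only [hy₁]
    congr 1
    conv_lhs => rw [show m + (p : ℤ) = m + (p : ℤ) * 1 by ring]
    rw [Int.add_mul_emod_self_left]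
  refine ⟨y₁, ?_, hper, ?_⟩
  · intro j ⟨m, hm⟩
    set r := m % (p : ℤ) with hr
    have hr0 : 0 ≤ r := Int.emod_nonneg m (by omega)
    have hrp : r < (p : ℤ) := Int.emod_lt_of_pos m hp0
    refine hy j ⟨r, fun i => ?_⟩
    have key : y₁ (r + (i : ℤ)) = y₁ (m + (i : ℤ)) := by
      simp only [hy₁]
      congr 1
      rw [hr]
      exact Int.emod_add_emod m (p : ℤ) (i : ℤ)
    have hb : y (r + (i : ℤ)) = y₁ (r + (i : ℤ)) :=
      (hagree (r + (i : ℤ)) (by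
        have : (0 : ℤ) ≤ (i : ℤ) := Int.natCast_nonneg _
        omega) (by
        have h1 : (i : ℤ) < (L : ℤ) := by exact_mod_cast i.2
        have h2 : (L : ℤ) ≤ (n : ℤ) := by exact_mod_cast hL
        omega)).symm
    rw [hb, key, hm i]
  · intro i
    have hi : ((i : ℕ) : ℤ) < (p : ℤ) + (n : ℤ) := by
      have : (i : ℕ) < n := i.2
      omega
    rw [hagree _ (by positivity) hi, h0 i]

/-- If there is a Borel equivariant map `F(2^ℤ) → Y`, then for every
`n ≥ L` and all sufficiently large `p, q` there are points `y₁, y₂ ∈ Y` of periods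
`p` and `q` respectively that agree on `[0, n)`. -/
theorem borel_equivariant_map_gives_periodic_points_for_large_periods
    (b L k : ℕ) (hb : 1 ≤ b) (hL : 1 ≤ L) (P : Fin k → Fin L → Fin b)
    (hf : ∃ f : {x : ℤ → Bool // x ∈ FreePart} → {y : ℤ → Fin b // y ∈ SFT P},
       Measurable f ∧ EquivariantOn (SFT P) f) :
    ∀ n : ℕ, L ≤ n → ∃ N : ℕ, ∀ p q : ℕ, N < p → N < q →
      ∃ y₁ ∈ SFT P, ∃ y₂ ∈ SFT P,
        (∀ m : ℤ, y₁ (m + (p : ℤ)) = y₁ m) ∧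
        (∀ m : ℤ, y₂ (m + (q : ℤ)) = y₂ m) ∧
        (∀ i : ℕ, i < n → y₁ (i : ℤ) = y₂ (i : ℤ)) := by
  classical
  open BEMaux MeasureTheory Set in
  obtain ⟨f, hfm, hfe⟩ := hf
  intro n hn
  -- the Borel map, extended to all of `2^ℤ`
  set F : (ℤ → Bool) → (ℤ → Fin b) := fun x =>
    if h : x ∈ FreePart then (f ⟨x, h⟩ : ℤ → Fin b) else (f ⟨_, x0_free⟩ : ℤ → Fin b) with hF
  have hFmem : ∀ x, F x ∈ SFT P := by
    intro x
    simp only [hF]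
    by_cases h : x ∈ FreePart
    · rw [dif_pos h]; exact (f ⟨x, h⟩).2
    · rw [dif_neg h]; exact (f ⟨_, x0_free⟩).2
  have hFmeas : Measurable F := by
    rw [hF]
    exact Measurable.dite (Measurable.comp (measurable_subtype_coe) hfm)
      (measurable_const :
        Measurable (fun _ : (FreePartᶜ : Set (ℤ → Bool)) => (f ⟨_, x0_free⟩ : ℤ → Fin b)))
      measurableSet_freePart
  have hFequi : ∀ x, x ∈ FreePart → ∀ s : ℤ, F (shift s x) = shift s (F x) := by
    intro x hx s
    have h1 : shift s x ∈ FreePart := freePart_shift hx s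
    simp only [hF]
    rw [dif_pos h1, dif_pos hx]
    exact hfe ⟨x, hx⟩ s h1
  -- the composed map on `(ℤ → ZMod 2)`
  set G : Bsp → (ℤ → Fin b) := fun x => F (emap x) with hG
  have hGmeas : Measurable G := hFmeas.comp emap_measurable
  have hGmem : ∀ x, G x ∈ SFT P := fun x => hFmem (emap x)
  -- window cylinders
  set Cyl : (Fin n → Fin b) → Set (ℤ → Fin b) :=
    fun u => {y | ∀ i : Fin n, y ((i : ℕ) : ℤ) = u i} with hCyl
  have hCylmeas : ∀ u, MeasurableSet (Cyl u) := by
    intro u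
    have h : Cyl u = ⋂ i : Fin n, ((fun y : ℤ → Fin b => y ((i : ℕ) : ℤ)) ⁻¹' {u i}) := by
      ext y; simp [hCyl]
    rw [h]
    exact MeasurableSet.iInter fun i =>
      (measurable_pi_apply _) (measurableSet_singleton _)
  set A : (Fin n → Fin b) → Set Bsp := fun u => (G ⁻¹' Cyl u) ∩ FreePartB with hA
  have hAmeas : ∀ u, MeasurableSet (A u) :=
    fun u => (hGmeas (hCylmeas u)).inter freePartB_meas
  -- some window has positive measure
  have hcover : FreePartB ⊆ ⋃ u : Fin n → Fin b, A u := by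
    intro x hx
    exact mem_iUnion.mpr ⟨fun i => G x ((i : ℕ) : ℤ), ⟨fun i => rfl, hx⟩⟩
  have hpos : ∃ u : Fin n → Fin b, muB (A u) ≠ 0 := by
    by_contra h0
    push_neg at h0
    have h1 : muB (⋃ u : Fin n → Fin b, A u) = 0 := measure_iUnion_null h0
    have h2 : muB FreePartB = 0 := measure_mono_null hcover h1
    rw [freePartB_one] at h2
    exact one_ne_zero h2
  obtain ⟨u, hu⟩ := hpos
  obtain ⟨N₀, hmix⟩ := mixing (hAmeas u) hu
  refine ⟨max N₀ n, fun p q hp hq => ?_⟩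
  -- a helper producing a periodic point for any large enough period
  have hpoint : ∀ r : ℕ, max N₀ n < r →
      ∃ y₁ ∈ SFT P, (∀ m : ℤ, y₁ (m + (r : ℤ)) = y₁ m) ∧
        (∀ i : Fin n, y₁ ((i : ℕ) : ℤ) = u i) := by
    intro r hr
    obtain ⟨x, hxA, hxA'⟩ := hmix (r : ℤ) (by
      have : N₀ < r := lt_of_le_of_lt (le_max_left _ _) hr
      exact_mod_cast this)
    obtain ⟨hxCyl, hxFree⟩ := hxA
    have hxCyl' : G (shift (r : ℤ) x) ∈ Cyl u := (hxA' : shift (r : ℤ) x ∈ A u).1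
    set y : ℤ → Fin b := G x with hy
    have hcomm : G (shift (r : ℤ) x) = shift (r : ℤ) (G x) := by
      rw [hG]
      simp only []
      rw [emap_shift, hFequi (emap x) hxFree (r : ℤ)]
    have h0 : ∀ i : Fin n, y ((i : ℕ) : ℤ) = u i := hxCyl
    have hpw : ∀ i : Fin n, y ((r : ℤ) + ((i : ℕ) : ℤ)) = u i := by
      intro i
      have h1 : G (shift (r : ℤ) x) ((i : ℕ) : ℤ) = u i := hxCyl' i
      rw [hcomm] at h1
      have h2 : shift (r : ℤ) (G x) ((i : ℕ) : ℤ) = G x (((i : ℕ) : ℤ) + r) := rfl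
      rw [h2] at h1
      rw [show (r : ℤ) + ((i : ℕ) : ℤ) = ((i : ℕ) : ℤ) + r by ring]
      exact h1
    exact BEMaux.periodize P (hGmem x) hn (lt_of_le_of_lt (le_max_right _ _) hr) h0 hpw
  obtain ⟨y₁, hy₁SFT, hy₁per, hy₁w⟩ := hpoint p hp
  obtain ⟨y₂, hy₂SFT, hy₂per, hy₂w⟩ := hpoint q hq
  refine ⟨y₁, hy₁SFT, y₂, hy₂SFT, hy₁per, hy₂per, fun i hi => ?_⟩
  have h1 := hy₁w ⟨i, hi⟩
  have h2 := hy₂w ⟨i, hi⟩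
  simp only [Fin.val_mk] at h1 h2
  rw [h1, h2]
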